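/- For integers k ≥ 2 and ℓ ≥ 0, a_{k,k+ℓ} = 2·∑_{i=0}^{k-2} C(ℓ,i)·F_{k-i} + 2·C(ℓ,k-1) + ∑_{j=1}^{ℓ} C(j, ℓ-j+k). -/

import Mathlib

open Finset

noncomputable def a (k n : ℕ) : ℕ :=
  {E : Finset ℕ | E ⊆ Finset.Icc 1 n ∧
    (E = ∅ ∨ ∃ h : E.Nonempty, (E.erase k).card < E.min' h)}.ncard

/-- the slack-generalized predicate -/
def ok (k s : ℕ) (E : Finset ℕ) : Prop :=
  E = ∅ ∨ ∃ h : E.Nonempty, (E.erase k).card + s < E.min' h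

noncomputable def cnt (k s n : ℕ) : ℕ :=
  (@Finset.filter _ (ok k s) (Classical.decPred _) ((Finset.Icc 1 n).powerset)).card

lemma ok_empty (k s : ℕ) : ok k s ∅ := Or.inl rfl

lemma ok_nonempty_iff {k s : ℕ} {E : Finset ℕ} (h : E.Nonempty) :
    ok k s E ↔ (E.erase k).card + s < E.min' h := by
  constructor
  · rintro (rfl | ⟨h', hlt⟩)
    · exact absurd rfl h.ne_empty
    · exact hlt
  · exact fun hlt => Or.inr ⟨h, hlt⟩

lemma subset_Icc_of_not_mem {E : Finset ℕ} {n : ℕ} (h : E ⊆ Finset.Icc 1 (n + 1))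
    (h2 : n + 1 ∉ E) : E ⊆ Finset.Icc 1 n := by
  intro x hx
  have hx2 := h hx
  simp only [Finset.mem_Icc] at hx2 ⊢
  have : x ≠ n + 1 := fun he => h2 (he ▸ hx)
  omega

lemma ok_insert_iff (k s n : ℕ) (E : Finset ℕ) (hE : E ⊆ Finset.Icc 1 n) :
    ok k s (insert (n + 1) E) ↔
      (ok k (if n + 1 = k then s else s + 1) E ∧
        (E.Nonempty ∨ (if n + 1 = k then s < k else s < n))) := by
  have hnm : n + 1 ∉ E := by
    intro h
    have := hE h
    simp only [Finset.mem_Icc] at this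
    omega
  rcases E.eq_empty_or_nonempty with rfl | hEne
  · simp only [insert_empty_eq]
    have hsing : ({n + 1} : Finset ℕ).Nonempty := singleton_nonempty _
    rw [ok_nonempty_iff hsing, Finset.min'_singleton]
    by_cases hk : n + 1 = k
    · rw [if_pos hk, if_pos hk, ← hk, Finset.erase_singleton]
      simp only [Finset.card_empty]
      constructor
      · intro h; exact ⟨ok_empty _ _, Or.inr (by omega)⟩
      · rintro ⟨-, h | h⟩
        · exact absurd rfl h.ne_empty
        · omega
    · rw [if_neg hk, if_neg hk, Finset.erase_eq_of_notMem (by simp [Ne.symm hk])]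
      simp only [Finset.card_singleton]
      constructor
      · intro h; exact ⟨ok_empty _ _, Or.inr (by omega)⟩
      · rintro ⟨-, h | h⟩
        · exact absurd rfl h.ne_empty
        · omega
  · have hins : (insert (n + 1) E).Nonempty := insert_nonempty _ _
    rw [ok_nonempty_iff hins]
    have hmin : (insert (n + 1) E).min' hins = E.min' hEne := by
      rw [Finset.min'_insert (H := hEne)]
      have : E.min' hEne ≤ n := by
        have := hE (E.min'_mem hEne)
        simp only [Finset.mem_Icc] at this
        omega
      simp only [min_eq_right_iff]  -- min (E.min' hEne) (n+1) = E.min'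
      omega
    rw [hmin]
    by_cases hk : n + 1 = k
    · have he1 : (insert (n + 1) E).erase k = E := by
        rw [← hk, Finset.erase_insert hnm]
      have he2 : E.erase k = E := Finset.erase_eq_of_notMem (hk ▸ hnm)
      rw [he1, if_pos hk, ok_nonempty_iff hEne, he2]
      exact ⟨fun h => ⟨h, Or.inl hEne⟩, fun ⟨h, _⟩ => h⟩
    · have he1 : (insert (n + 1) E).erase k = insert (n + 1) (E.erase k) :=
        Finset.erase_insert_of_ne hk
      have he2 : n + 1 ∉ E.erase k := fun h => hnm (Finset.mem_of_mem_erase h)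
      rw [he1, Finset.card_insert_of_notMem he2, if_neg hk, ok_nonempty_iff hEne]
      constructor
      · intro h; exact ⟨by omega, Or.inl hEne⟩
      · rintro ⟨h, -⟩; omega

lemma cnt_succ (k s n : ℕ) :
    cnt k s (n + 1) + 1 =
      cnt k s n + cnt k (if n + 1 = k then s else s + 1) n
        + (if n + 1 = k then (if s < k then 1 else 0) else (if s < n then 1 else 0)) := by
  classical
  set s' := if n + 1 = k then s else s + 1 with hs'
  set c0 : Prop := if n + 1 = k then s < k else s < n with hc0
  have hite : (if n + 1 = k then (if s < k then 1 else 0) else (if s < n then 1 else 0)) =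
      (if c0 then 1 else 0) := by
    by_cases hk : n + 1 = k <;> simp [hc0, hk]
  rw [hite]
  have hsplit :
      (((Finset.Icc 1 (n + 1)).powerset.filter (ok k s)).filter (fun E => n + 1 ∈ E)).card
        + (((Finset.Icc 1 (n + 1)).powerset.filter (ok k s)).filter (fun E => ¬ n + 1 ∈ E)).card
        = cnt k s (n + 1) := by
    rw [cnt]
    exact Finset.card_filter_add_card_filter_not _
  -- without part
  have h2 : (((Finset.Icc 1 (n + 1)).powerset.filter (ok k s)).filter (fun E => ¬ n + 1 ∈ E)).card
      = cnt k s n := by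
    rw [cnt]
    congr 1
    ext E
    simp only [Finset.mem_filter, Finset.mem_powerset]
    constructor
    · rintro ⟨⟨hsub, hok⟩, hmem⟩
      exact ⟨subset_Icc_of_not_mem hsub hmem, hok⟩
    · rintro ⟨hsub, hok⟩
      refine ⟨⟨hsub.trans (Finset.Icc_subset_Icc_right (by omega)), hok⟩, fun hm => ?_⟩
      have := hsub hm
      simp only [Finset.mem_Icc] at this
      omega
  -- with part via bijection
  have h3 : (((Finset.Icc 1 (n + 1)).powerset.filter (ok k s)).filter (fun E => n + 1 ∈ E)).card
      = ((Finset.Icc 1 n).powerset.filter (fun E => ok k s (insert (n + 1) E))).card := by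
    refine Finset.card_bij' (fun E _ => E.erase (n + 1)) (fun E _ => insert (n + 1) E)
      ?_ ?_ ?_ ?_
    · intro E hE
      simp only [Finset.mem_filter, Finset.mem_powerset] at hE ⊢
      obtain ⟨⟨hsub, hok⟩, hmem⟩ := hE
      refine ⟨subset_Icc_of_not_mem ((Finset.erase_subset _ _).trans hsub)
        (Finset.notMem_erase _ _), ?_⟩
      rwa [Finset.insert_erase hmem]
    · intro E hE
      simp only [Finset.mem_filter, Finset.mem_powerset] at hE ⊢
      obtain ⟨hsub, hok⟩ := hE
      refine ⟨⟨Finset.insert_subset (Finset.mem_Icc.2 (by omega))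
        (hsub.trans (Finset.Icc_subset_Icc_right (by omega))), hok⟩, Finset.mem_insert_self _ _⟩
    · intro E hE
      simp only [Finset.mem_filter] at hE
      exact Finset.insert_erase hE.2
    · intro E hE
      simp only [Finset.mem_filter, Finset.mem_powerset] at hE
      apply Finset.erase_insert
      intro hm
      have := hE.1 hm
      simp only [Finset.mem_Icc] at this
      omega
  -- rewrite the insert-predicate
  have h4 : (Finset.Icc 1 n).powerset.filter (fun E => ok k s (insert (n + 1) E))
      = (Finset.Icc 1 n).powerset.filter (fun E => ok k s' E ∧ (E.Nonempty ∨ c0)) := by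
    apply Finset.filter_congr
    intro E hE
    simp only [Finset.mem_powerset] at hE
    rw [hs', hc0]
    exact ⟨fun h => (ok_insert_iff k s n E hE).1 h, fun h => (ok_insert_iff k s n E hE).2 h⟩
  by_cases hc : c0
  · have h5 : (Finset.Icc 1 n).powerset.filter (fun E => ok k s' E ∧ (E.Nonempty ∨ c0))
        = (Finset.Icc 1 n).powerset.filter (ok k s') := by
      apply Finset.filter_congr
      intro E _
      exact ⟨fun ⟨h, _⟩ => h, fun h => ⟨h, Or.inr hc⟩⟩
    rw [h4, h5] at h3
    have : ((Finset.Icc 1 n).powerset.filter (ok k s')).card = cnt k s' n := by rw [cnt]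
    rw [this] at h3
    rw [if_pos hc]
    omega
  · have h5 : (Finset.Icc 1 n).powerset.filter (fun E => ok k s' E ∧ (E.Nonempty ∨ c0))
        = ((Finset.Icc 1 n).powerset.filter (ok k s')).filter (fun E => E ≠ ∅) := by
      rw [Finset.filter_filter]
      apply Finset.filter_congr
      intro E _
      constructor
      · rintro ⟨h, hne | h0⟩
        · exact ⟨h, hne.ne_empty⟩
        · exact absurd h0 hc
      · rintro ⟨h, hne⟩
        exact ⟨h, Or.inl (Finset.nonempty_iff_ne_empty.2 hne)⟩
    have h6 : (((Finset.Icc 1 n).powerset.filter (ok k s')).filter (fun E => E ≠ ∅)).card + 1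
        = cnt k s' n := by
      rw [cnt]
      have := Finset.card_filter_add_card_filter_not
        (s := (Finset.Icc 1 n).powerset.filter (ok k s')) (p := fun E => E ≠ ∅)
      have h7 : ((Finset.Icc 1 n).powerset.filter (ok k s')).filter (fun E => ¬ E ≠ ∅) = {∅} := by
        ext E
        simp only [Finset.mem_filter, Finset.mem_powerset, Finset.mem_singleton, not_not]
        constructor
        · rintro ⟨-, h⟩; exact h
        · rintro rfl
          exact ⟨⟨Finset.empty_subset _, ok_empty _ _⟩, rfl⟩
      rw [h7] at this
      simp only [Finset.card_singleton] at this
      omega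
    rw [h4, h5] at h3
    rw [if_neg hc]
    omega

lemma a_eq_cnt (k n : ℕ) : a k n = cnt k 0 n := by
  classical
  have : {E : Finset ℕ | E ⊆ Finset.Icc 1 n ∧
      (E = ∅ ∨ ∃ h : E.Nonempty, (E.erase k).card < E.min' h)} =
      ↑(@Finset.filter _ (ok k 0) (Classical.decPred _) ((Finset.Icc 1 n).powerset)) := by
    ext E
    simp [ok, Finset.mem_coe, Finset.mem_filter, Finset.mem_powerset]
  rw [a, this, Set.ncard_coe_finset, cnt]

lemma cnt_zero (k s : ℕ) : cnt k s 0 = 1 := by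
  classical
  rw [cnt]
  have : Finset.Icc 1 0 = (∅ : Finset ℕ) := by simp
  rw [this]
  have h : ok k s ∅ := Or.inl rfl
  rw [Finset.powerset_empty, Finset.filter_singleton, if_pos h]
  simp

lemma fib_step (s n : ℕ) :
    Nat.fib (n + 1 - s + 1) + 1 =
      Nat.fib (n - s + 1) + Nat.fib (n - (s + 1) + 1) + (if s < n then 1 else 0) := by
  rcases lt_or_ge s n with h | h
  · obtain ⟨d, hd⟩ : ∃ d, n - s = d + 1 := ⟨n - s - 1, by omega⟩
    have h1 : n + 1 - s = d + 2 := by omega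
    have h2 : n - (s + 1) = d := by omega
    rw [hd, h1, h2, if_pos h]
    rw [Nat.fib_add_two (n := d + 1)]
    ring
  · rcases eq_or_lt_of_le h with h' | h'
    · have h1 : n + 1 - s = 1 := by omega
      have h2 : n - s = 0 := by omega
      have h3 : n - (s + 1) = 0 := by omega
      simp [h1, h2, h3, h'.symm ▸ (lt_irrefl n)]
      omega
    · have h1 : n + 1 - s = 0 := by omega
      have h2 : n - s = 0 := by omega
      have h3 : n - (s + 1) = 0 := by omega
      rw [h1, h2, h3, if_neg (by omega)]
      simp [Nat.fib_one]

lemma fib_sum (n : ℕ) :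
    ∑ r ∈ Finset.range (n + 1), Nat.choose (n - r) r = Nat.fib (n + 1) := by
  induction n using Nat.strong_induction_on with
  | _ n ih =>
    match n with
    | 0 => simp
    | 1 => simp [Finset.sum_range_succ]
    | (n + 2) =>
      have key : ∀ r ∈ Finset.range (n + 2),
          (n + 1 - r).choose (r + 1) = (n - r).choose r + (n - r).choose (r + 1) := by
        intro r hr
        rcases le_or_gt r n with h | h
        · have : n + 1 - r = (n - r) + 1 := by omega
          rw [this, Nat.choose_succ_succ]
        · have h1 : r = n + 1 := by simp at hr; omega
          subst h1
          simp [Nat.choose_eq_zero_of_lt]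
      calc ∑ r ∈ Finset.range (n + 3), (n + 2 - r).choose r
          = ∑ r ∈ Finset.range (n + 2), (n + 1 - r).choose (r + 1) + (n + 2).choose 0 := by
            rw [Finset.sum_range_succ' (fun r => (n + 2 - r).choose r) (n + 2)]
            congr 1
            refine Finset.sum_congr rfl fun r _ => ?_
            congr 1
            omega
        _ = ∑ r ∈ Finset.range (n + 2), ((n - r).choose r + (n - r).choose (r + 1)) + 1 := by
            rw [Finset.sum_congr rfl key]; simp
        _ = (∑ r ∈ Finset.range (n + 2), (n - r).choose r)
              + (1 + ∑ r ∈ Finset.range (n + 2), (n - r).choose (r + 1)) := by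
            rw [Finset.sum_add_distrib]; ring
        _ = Nat.fib (n + 1) + Nat.fib (n + 2) := by
            congr 1
            · rw [Finset.sum_range_succ]
              have : n - (n + 1) = 0 := by omega
              rw [this]
              simpa using ih n (by omega)
            · have h2 := ih (n + 1) (by omega)
              rw [Finset.sum_range_succ' (fun r => (n + 1 - r).choose r) (n + 1)] at h2
              simp only [Nat.sub_zero, Nat.choose_zero_right] at h2
              have e : ∀ r, (n + 1 - (r + 1)).choose (r + 1) = (n - r).choose (r + 1) := by
                intro r; congr 1; omega
              simp only [e, show n + 1 + 1 = n + 2 from rfl] at h2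
              rw [Finset.sum_range_succ]
              have z : (n - (n + 1)).choose (n + 1 + 1) = 0 := by
                have : n - (n + 1) = 0 := by omega
                rw [this]; exact Nat.choose_eq_zero_of_lt (by omega)
              rw [z]
              omega
        _ = Nat.fib (n + 3) := (Nat.fib_add_two).symm

def b (k : ℕ) : ℕ → ℕ → ℕ
  | _, 0 => 0
  | s, n + 1 => b k s n + b k (if n + 1 = k then s else s + 1) n
      + (if n + 1 = k then (if s < k then 1 else 0) else (if s < n then 1 else 0))

lemma cnt_eq_b (k s n : ℕ) : cnt k s n = b k s n + 1 := by
  induction n generalizing s with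
  | zero => simpa [b] using cnt_zero k s
  | succ n ih =>
      have h := cnt_succ k s n
      rw [ih, ih] at h
      simp only [b]
      omega

lemma phase1 (k s n : ℕ) (hn : n < k) : b k s n + 1 = Nat.fib (n - s + 1) := by
  induction n generalizing s with
  | zero => simp [b]
  | succ n ih =>
      have hne : ¬(n + 1 = k) := by omega
      simp only [b, if_neg hne]
      have h1 := ih s (by omega)
      have h2 := ih (s + 1) (by omega)
      have h3 := fib_step s n
      by_cases hs : s < n <;>
        simp only [if_pos, if_neg, hs, if_true, if_false] at h3 ⊢ <;> omega


lemma icc_sum_reindex (a c X : ℕ) :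
    ∑ m ∈ Finset.Icc a c, Nat.choose (X - m) (m - a) =
      ∑ r ∈ Finset.range (c + 1 - a), Nat.choose (X - a - r) r := by
  rw [← Finset.Ico_add_one_right_eq_Icc, Finset.sum_Ico_eq_sum_range]
  refine Finset.sum_congr rfl fun r _ => ?_
  congr 1 <;> omega

lemma range_fib_sum (e : ℕ) :
    ∑ r ∈ Finset.range e, Nat.choose (e - 1 - r) r = Nat.fib e := by
  match e with
  | 0 => simp
  | e + 1 =>
      rw [← fib_sum e]
      rfl

/-- splitting off the bottom element of an `Icc` sum -/
lemma icc_sum_split (a c : ℕ) (h : a ≤ c) (f : ℕ → ℕ) :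
    ∑ m ∈ Finset.Icc a c, f m = f a + ∑ m ∈ Finset.Icc (a + 1) c, f m := by
  rw [Finset.Icc_add_one_left_eq_Ioc, ← Finset.Ioc_insert_left h, Finset.sum_insert (by simp)]

lemma phase2 (k : ℕ) (hk : 2 ≤ k) (t s : ℕ) :
    b k s (k + t) + 1 =
      Nat.fib (k + t - s + 1) + (if s < k then Nat.choose t (k - 1 - s) else 0)
        + ∑ m ∈ Finset.Icc (s + 2) (k - 1), Nat.choose (k + t - 1 - m) (m - (s + 2)) := by
  induction t generalizing s with
  | zero =>
      obtain ⟨k', rfl⟩ : ∃ k', k = k' + 1 := ⟨k - 1, by omega⟩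
      have hb : b (k' + 1) s (k' + 1 + 0) = b (k' + 1) s k' + b (k' + 1) s k'
          + (if s < k' + 1 then 1 else 0) := by
        show b (k' + 1) s (k' + 1) = _
        simp [b]
      have hp := phase1 (k' + 1) s k' (by omega)
      have hsum : ∑ m ∈ Finset.Icc (s + 2) (k' + 1 - 1), Nat.choose (k' + 1 + 0 - 1 - m) (m - (s + 2)) =
          Nat.fib (k' - 1 - s) := by
        rw [icc_sum_reindex (s + 2) (k' + 1 - 1) (k' + 1 + 0 - 1)]
        have h1 : k' + 1 - 1 + 1 - (s + 2) = k' - 1 - s := by omega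
        rw [h1, ← range_fib_sum (k' - 1 - s)]
        refine Finset.sum_congr rfl fun r _ => ?_
        congr 1
        omega
      rw [hb, hsum]
      rcases lt_trichotomy s k' with hlt | heq | hgt
      · obtain ⟨d, rfl⟩ : ∃ d, k' = s + d + 1 := ⟨k' - s - 1, by omega⟩
        have e1 : s + d + 1 + 1 + 0 - s + 1 = d + 3 := by omega
        have e2 : s + d + 1 + 1 - 1 - s = d + 1 := by omega
        have e3 : s + d + 1 - 1 - s = d := by omega
        have e4 : s + d + 1 - s + 1 = d + 2 := by omega
        rw [e1, e2, e3]
        rw [e4] at hp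
        have hpos : s < s + d + 1 + 1 := by omega
        rw [if_pos hpos, if_pos hpos]
        have c0 : Nat.choose 0 (d + 1) = 0 := Nat.choose_eq_zero_of_lt (by omega)
        rw [c0]
        have g1 : Nat.fib (d + 2) = Nat.fib d + Nat.fib (d + 1) := Nat.fib_add_two
        have g2 : Nat.fib (d + 3) = Nat.fib (d + 1) + Nat.fib (d + 2) := Nat.fib_add_two
        omega
      · subst heq
        have e1 : s + 1 + 0 - s + 1 = 2 := by omega
        have e2 : s + 1 - 1 - s = 0 := by omega
        have e3 : s - 1 - s = 0 := by omega
        have e4 : s - s + 1 = 1 := by omega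
        rw [e1, e2, e3]
        rw [e4] at hp
        have hpos : s < s + 1 := by omega
        rw [if_pos hpos, if_pos hpos]
        have g1 : Nat.fib 1 = 1 := Nat.fib_one
        have g2 : Nat.fib 2 = 1 := Nat.fib_two
        have g3 : Nat.fib 0 = 0 := Nat.fib_zero
        have c0 : Nat.choose 0 0 = 1 := rfl
        rw [c0]
        omega
      · have e1 : k' + 1 + 0 - s + 1 = 1 := by omega
        have e2 : k' - 1 - s = 0 := by omega
        have e4 : k' - s + 1 = 1 := by omega
        rw [e1, e2]
        rw [e4] at hp
        have hneg : ¬ (s < k' + 1) := by omega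
        rw [if_neg hneg, if_neg hneg]
        have g1 : Nat.fib 1 = 1 := Nat.fib_one
        have g3 : Nat.fib 0 = 0 := Nat.fib_zero
        omega
  | succ t ih =>
      have hb : b k s (k + (t + 1)) = b k s (k + t) + b k (s + 1) (k + t)
          + (if s < k + t then 1 else 0) := by
        have : k + (t + 1) = (k + t) + 1 := by omega
        rw [this]
        have hne : ¬(k + t + 1 = k) := by omega
        simp only [b, if_neg hne]
      have hA := ih s
      have hB := ih (s + 1)
      -- fib step
      have hf : Nat.fib (k + t + 1 - s + 1) + 1 =
          Nat.fib (k + t - s + 1) + Nat.fib (k + t - (s + 1) + 1) + (if s < k + t then 1 else 0) :=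
        fib_step s (k + t)
      have ef : k + (t + 1) - s + 1 = k + t + 1 - s + 1 := by omega
      -- choose head identity
      have hc : (if s < k then Nat.choose (t + 1) (k - 1 - s) else 0) =
          (if s < k then Nat.choose t (k - 1 - s) else 0)
            + (if s + 1 < k then Nat.choose t (k - 1 - (s + 1)) else 0) := by
        rcases lt_trichotomy (s + 1) k with h1 | h1 | h1
        · obtain ⟨j, hj⟩ : ∃ j, k - 1 - (s + 1) = j := ⟨_, rfl⟩
          have hj1 : k - 1 - s = j + 1 := by omega
          rw [if_pos (by omega), if_pos (by omega), if_pos h1, hj1, hj, Nat.choose_succ_succ]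
          simp only [Nat.succ_eq_add_one]
          omega
        · have : k - 1 - s = 0 := by omega
          rw [if_pos (by omega), if_pos (by omega), if_neg (by omega), this]
          simp
        · rw [if_neg (by omega), if_neg (by omega), if_neg (by omega)]
      -- sum identity
      have hs : ∑ m ∈ Finset.Icc (s + 2) (k - 1), Nat.choose (k + (t + 1) - 1 - m) (m - (s + 2)) =
          ∑ m ∈ Finset.Icc (s + 2) (k - 1), Nat.choose (k + t - 1 - m) (m - (s + 2))
            + ∑ m ∈ Finset.Icc (s + 1 + 2) (k - 1), Nat.choose (k + t - 1 - m) (m - (s + 1 + 2)) := by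
        by_cases hle : s + 2 ≤ k - 1
        · rw [icc_sum_split _ _ hle, icc_sum_split _ _ hle]
          have h0 : Nat.choose (k + (t + 1) - 1 - (s + 2)) (s + 2 - (s + 2)) = 1 := by
            simp [Nat.sub_self]
          have h0' : Nat.choose (k + t - 1 - (s + 2)) (s + 2 - (s + 2)) = 1 := by
            simp [Nat.sub_self]
          rw [h0, h0']
          have tw : ∀ m ∈ Finset.Icc (s + 2 + 1) (k - 1),
              Nat.choose (k + (t + 1) - 1 - m) (m - (s + 2)) =
                Nat.choose (k + t - 1 - m) (m - (s + 2))
                  + Nat.choose (k + t - 1 - m) (m - (s + 1 + 2)) := by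
            intro m hm
            simp only [Finset.mem_Icc] at hm
            obtain ⟨j, hj⟩ : ∃ j, m - (s + 1 + 2) = j := ⟨_, rfl⟩
            have hj1 : m - (s + 2) = j + 1 := by omega
            have ha : k + (t + 1) - 1 - m = (k + t - 1 - m) + 1 := by omega
            rw [hj, hj1, ha, Nat.choose_succ_succ]
            simp only [Nat.succ_eq_add_one]
            omega
          rw [Finset.sum_congr rfl tw, Finset.sum_add_distrib]
          have : s + 2 + 1 = s + 1 + 2 := by omega
          rw [this]
          omega
        · have e1 : Finset.Icc (s + 2) (k - 1) = ∅ := by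
            rw [Finset.Icc_eq_empty_iff]; omega
          have e2 : Finset.Icc (s + 1 + 2) (k - 1) = ∅ := by
            rw [Finset.Icc_eq_empty_iff]; omega
          simp [e1, e2]
      rw [hb, hs, ef]
      by_cases hskt : s < k + t <;>
        simp only [hskt, if_true, if_false] at hf hb ⊢ <;> omega


def L (k ℓ : ℕ) : ℕ :=
  Nat.fib (k + ℓ + 1) + ∑ m ∈ Finset.Icc 2 (k - 1), Nat.choose (k + ℓ - 1 - m) (m - 2)

def R (k ℓ : ℕ) : ℕ :=
  2 * ∑ i ∈ Finset.range (k - 1), Nat.choose ℓ i * Nat.fib (k - i)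
    + Nat.choose ℓ (k - 1) + ∑ j ∈ Finset.Icc 1 ℓ, Nat.choose j (ℓ - j + k)

lemma base_k2 (ℓ : ℕ) : L 2 ℓ = R 2 ℓ := by
  have hL : L 2 ℓ = Nat.fib (ℓ + 3) := by
    rw [L]
    have : Finset.Icc 2 (2 - 1) = ∅ := by decide
    rw [this]
    simp only [Finset.sum_empty, add_zero]
    congr 1
    omega
  have hR : R 2 ℓ = 2 + ℓ + ∑ j ∈ Finset.Icc 1 ℓ, Nat.choose j (ℓ - j + 2) := by
    rw [R]
    norm_num [Finset.sum_range_one, Nat.choose_one_right]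
  rw [hL, hR]
  -- fib (ℓ+3) = 2 + ℓ + ∑_{j=1}^{ℓ} C(j, ℓ-j+2)
  have h1 : Nat.fib (ℓ + 3) = ∑ r ∈ Finset.range (ℓ + 3), Nat.choose (ℓ + 2 - r) r := by
    rw [fib_sum (ℓ + 2)]
  rw [h1]
  rw [Finset.sum_range_succ' (fun r => Nat.choose (ℓ + 2 - r) r) (ℓ + 2)]
  rw [Finset.sum_range_succ' (fun r => Nat.choose (ℓ + 2 - (r + 1)) (r + 1)) (ℓ + 1)]
  have e0 : Nat.choose (ℓ + 2 - 0) 0 = 1 := Nat.choose_zero_right _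
  have e1 : Nat.choose (ℓ + 2 - (0 + 1)) (0 + 1) = ℓ + 1 := by
    simp [Nat.choose_one_right]
  rw [e0, e1]
  have e2 : ∑ r ∈ Finset.range (ℓ + 1), Nat.choose (ℓ + 2 - (r + 1 + 1)) (r + 1 + 1) =
      ∑ r ∈ Finset.range (ℓ + 1), (fun j => Nat.choose j (ℓ - j + 2)) (ℓ + 1 - 1 - r) := by
    refine Finset.sum_congr rfl fun r hr => ?_
    simp only [Finset.mem_range] at hr
    simp only
    congr 1 <;> omega
  rw [e2, Finset.sum_range_reflect (fun j => Nat.choose j (ℓ - j + 2)) (ℓ + 1)]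
  -- range (ℓ+1) sum → Icc 1 ℓ sum
  have e3 : ∑ j ∈ Finset.range (ℓ + 1), Nat.choose j (ℓ - j + 2) =
      ∑ j ∈ Finset.Icc 0 ℓ, Nat.choose j (ℓ - j + 2) := by
    rw [← Finset.Ico_add_one_right_eq_Icc, ← Finset.range_eq_Ico]
  rw [e3, icc_sum_split 0 ℓ (by omega)]
  have e4 : Nat.choose 0 (ℓ - 0 + 2) = 0 := Nat.choose_eq_zero_of_lt (by omega)
  rw [e4]
  have e5 : ∑ m ∈ Finset.Icc (0 + 1) ℓ, Nat.choose m (ℓ - m + 2) =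
      ∑ j ∈ Finset.Icc 1 ℓ, Nat.choose j (ℓ - j + 2) := by norm_num
  rw [e5]
  omega

lemma Lstep (k ℓ : ℕ) (hk : 3 ≤ k) : L k (ℓ + 1) = L k ℓ + L (k - 1) ℓ := by
  simp only [L]
  have hfib : Nat.fib (k + (ℓ + 1) + 1) = Nat.fib (k + ℓ + 1) + Nat.fib (k - 1 + ℓ + 1) := by
    have e1 : k + (ℓ + 1) + 1 = k + ℓ + 2 := by omega
    have e2 : k - 1 + ℓ + 1 = k + ℓ := by omega
    rw [e1, e2]
    have h2 : Nat.fib (k + ℓ + 2) = Nat.fib (k + ℓ) + Nat.fib (k + ℓ + 1) := Nat.fib_add_two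
    omega
  have hsum : ∑ m ∈ Finset.Icc 2 (k - 1), Nat.choose (k + (ℓ + 1) - 1 - m) (m - 2) =
      ∑ m ∈ Finset.Icc 2 (k - 1), Nat.choose (k + ℓ - 1 - m) (m - 2)
        + ∑ m ∈ Finset.Icc 2 (k - 1 - 1), Nat.choose (k - 1 + ℓ - 1 - m) (m - 2) := by
    have h21 : (2 : ℕ) ≤ k - 1 := by omega
    rw [icc_sum_split 2 (k - 1) h21, icc_sum_split 2 (k - 1) h21]
    have h0 : Nat.choose (k + (ℓ + 1) - 1 - 2) (2 - 2) = 1 := by simp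
    have h0' : Nat.choose (k + ℓ - 1 - 2) (2 - 2) = 1 := by simp
    rw [h0, h0']
    have tw : ∀ m ∈ Finset.Icc (2 + 1) (k - 1),
        Nat.choose (k + (ℓ + 1) - 1 - m) (m - 2) =
          Nat.choose (k + ℓ - 1 - m) (m - 2) + Nat.choose (k + ℓ - 1 - m) (m - 3) := by
      intro m hm
      simp only [Finset.mem_Icc] at hm
      obtain ⟨j, hj⟩ : ∃ j, m - 3 = j := ⟨_, rfl⟩
      have hj1 : m - 2 = j + 1 := by omega
      have ha : k + (ℓ + 1) - 1 - m = (k + ℓ - 1 - m) + 1 := by omega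
      rw [hj, hj1, ha, Nat.choose_succ_succ]
      simp only [Nat.succ_eq_add_one]
      omega
    rw [Finset.sum_congr rfl tw, Finset.sum_add_distrib]
    -- ∑_{m∈Icc 3 (k-1)} C(k+ℓ-1-m, m-3) = ∑_{m∈Icc 2 (k-2)} C(k-1+ℓ-1-m, m-2)
    have hre : ∑ m ∈ Finset.Icc (2 + 1) (k - 1), Nat.choose (k + ℓ - 1 - m) (m - 3) =
        ∑ m ∈ Finset.Icc 2 (k - 1 - 1), Nat.choose (k - 1 + ℓ - 1 - m) (m - 2) := by
      have r1 : ∑ m ∈ Finset.Icc (2 + 1) (k - 1), Nat.choose (k + ℓ - 1 - m) (m - 3) =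
          ∑ r ∈ Finset.range (k - 1 + 1 - 3), Nat.choose (k + ℓ - 1 - 3 - r) r := by
        exact icc_sum_reindex 3 (k - 1) (k + ℓ - 1)
      have r2 : ∑ m ∈ Finset.Icc 2 (k - 1 - 1), Nat.choose (k - 1 + ℓ - 1 - m) (m - 2) =
          ∑ r ∈ Finset.range (k - 1 - 1 + 1 - 2), Nat.choose (k - 1 + ℓ - 1 - 2 - r) r :=
        icc_sum_reindex 2 (k - 1 - 1) (k - 1 + ℓ - 1)
      rw [r1, r2]
      have eb : k - 1 + 1 - 3 = k - 1 - 1 + 1 - 2 := by omega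
      rw [eb]
      refine Finset.sum_congr rfl fun r _ => ?_
      have : k + ℓ - 1 - 3 - r = k - 1 + ℓ - 1 - 2 - r := by omega
      rw [this]
    rw [hre]
    omega
  rw [hfib, hsum]
  ring

lemma Rstep (k ℓ : ℕ) (hk : 3 ≤ k) : R k (ℓ + 1) = R k ℓ + R (k - 1) ℓ := by
  simp only [R]
  -- piece 1
  have p1 : ∑ i ∈ Finset.range (k - 1), Nat.choose (ℓ + 1) i * Nat.fib (k - i) =
      ∑ i ∈ Finset.range (k - 1), Nat.choose ℓ i * Nat.fib (k - i)
        + ∑ i ∈ Finset.range (k - 1 - 1), Nat.choose ℓ i * Nat.fib (k - 1 - i) := by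
    obtain ⟨e, he⟩ : ∃ e, k - 1 = e + 1 := ⟨k - 2, by omega⟩
    have he' : k - 1 - 1 = e := by omega
    rw [he', he]
    rw [Finset.sum_range_succ' (fun i => Nat.choose (ℓ + 1) i * Nat.fib (k - i)) e]
    rw [Finset.sum_range_succ' (fun i => Nat.choose ℓ i * Nat.fib (k - i)) e]
    simp only [Nat.choose_zero_right, Nat.sub_zero, one_mul]
    have tw : ∀ i ∈ Finset.range e, Nat.choose (ℓ + 1) (i + 1) * Nat.fib (k - (i + 1)) =
        Nat.choose ℓ i * Nat.fib (e + 1 - i) + Nat.choose ℓ (i + 1) * Nat.fib (k - (i + 1)) := by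
      intro i _
      rw [Nat.choose_succ_succ, add_mul]
      have : k - (i + 1) = e + 1 - i := by omega
      rw [this]
    rw [Finset.sum_congr rfl tw, Finset.sum_add_distrib]
    ring
  -- piece 2
  have p2 : Nat.choose (ℓ + 1) (k - 1) = Nat.choose ℓ (k - 1) + Nat.choose ℓ (k - 1 - 1) := by
    obtain ⟨e, he⟩ : ∃ e, k - 1 = e + 1 := ⟨k - 2, by omega⟩
    have he' : k - 1 - 1 = e := by omega
    rw [he', he, Nat.choose_succ_succ]
    simp only [Nat.succ_eq_add_one]
    omega
  -- piece 3
  have p3 : ∑ j ∈ Finset.Icc 1 (ℓ + 1), Nat.choose j (ℓ + 1 - j + k) =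
      ∑ j ∈ Finset.Icc 1 ℓ, Nat.choose j (ℓ - j + k)
        + ∑ j ∈ Finset.Icc 1 ℓ, Nat.choose j (ℓ - j + (k - 1)) := by
    have l1 : ∑ j ∈ Finset.Icc 1 (ℓ + 1), Nat.choose j (ℓ + 1 - j + k) =
        ∑ r ∈ Finset.range (ℓ + 1), Nat.choose (1 + r) (ℓ + 1 - (1 + r) + k) := by
      rw [← Finset.Ico_add_one_right_eq_Icc, Finset.sum_Ico_eq_sum_range]
      have : ℓ + 1 + 1 - 1 = ℓ + 1 := by omega
      rw [this]
    have l2 : ∀ r ∈ Finset.range (ℓ + 1), Nat.choose (1 + r) (ℓ + 1 - (1 + r) + k) =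
        Nat.choose r (ℓ - r + (k - 1)) + Nat.choose r (ℓ - r + k) := by
      intro r hr
      simp only [Finset.mem_range] at hr
      have e1 : 1 + r = r + 1 := by omega
      rw [e1]
      have e2 : ℓ + 1 - (r + 1) + k = (ℓ - r + (k - 1)) + 1 := by omega
      rw [e2, Nat.choose_succ_succ]
      simp only [Nat.succ_eq_add_one]
      have e3 : ℓ - r + (k - 1) + 1 = ℓ - r + k := by omega
      rw [e3]
    rw [l1, Finset.sum_congr rfl l2, Finset.sum_add_distrib]
    have cvt : ∀ c : ℕ, 1 ≤ c → ∑ r ∈ Finset.range (ℓ + 1), Nat.choose r (ℓ - r + c) =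
        ∑ j ∈ Finset.Icc 1 ℓ, Nat.choose j (ℓ - j + c) := by
      intro c hc
      have e3 : ∑ r ∈ Finset.range (ℓ + 1), Nat.choose r (ℓ - r + c) =
          ∑ j ∈ Finset.Icc 0 ℓ, Nat.choose j (ℓ - j + c) := by
        rw [← Finset.Ico_add_one_right_eq_Icc, ← Finset.range_eq_Ico]
      rw [e3, icc_sum_split 0 ℓ (by omega)]
      have e4 : Nat.choose 0 (ℓ - 0 + c) = 0 := Nat.choose_eq_zero_of_lt (by omega)
      rw [e4]
      norm_num
    rw [cvt (k - 1) (by omega), cvt k (by omega)]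
    omega
  rw [p1, p2, p3]
  ring

lemma claimX (ℓ : ℕ) : ∀ k, 2 ≤ k → L k ℓ = R k ℓ := by
  induction ℓ with
  | zero =>
      intro k hk
      have hL : L k 0 = Nat.fib (k + 1) + Nat.fib (k - 2) := by
        rw [L]
        congr 1
        rw [icc_sum_reindex 2 (k - 1) (k + 0 - 1)]
        have e1 : k - 1 + 1 - 2 = k - 2 := by omega
        rw [e1, ← range_fib_sum (k - 2)]
        refine Finset.sum_congr rfl fun r _ => ?_
        have : k + 0 - 1 - 2 - r = k - 2 - 1 - r := by omega
        rw [this]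
      have hR : R k 0 = 2 * Nat.fib k := by
        rw [R]
        have h1 : ∑ i ∈ Finset.range (k - 1), Nat.choose 0 i * Nat.fib (k - i) = Nat.fib k := by
          rw [Finset.sum_eq_single_of_mem 0 (Finset.mem_range.2 (by omega))]
          · simp
          · intro i _ hi
            rw [Nat.choose_eq_zero_of_lt (by omega)]
            ring
        have h2 : Nat.choose 0 (k - 1) = 0 := Nat.choose_eq_zero_of_lt (by omega)
        have h3 : Finset.Icc 1 0 = (∅ : Finset ℕ) := by simp
        rw [h1, h2, h3]
        simp
      obtain ⟨d, rfl⟩ : ∃ d, k = d + 2 := ⟨k - 2, by omega⟩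
      have e1 : d + 2 - 2 = d := by omega
      have e2 : d + 2 + 1 = d + 3 := by omega
      rw [hL, hR, e1, e2]
      have g1 : Nat.fib (d + 2) = Nat.fib d + Nat.fib (d + 1) := Nat.fib_add_two
      have g2 : Nat.fib (d + 3) = Nat.fib (d + 1) + Nat.fib (d + 2) := Nat.fib_add_two
      omega
  | succ ℓ ih =>
      intro k hk
      rcases eq_or_lt_of_le hk with h2 | h3
      · rw [← h2]; exact base_k2 (ℓ + 1)
      · have h3 : 3 ≤ k := h3
        rw [Lstep k ℓ h3, Rstep k ℓ h3, ih k hk, ih (k - 1) (by omega)]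

theorem stmt5 (k ℓ : ℕ) (hk : k ≥ 2) :
    a k (k + ℓ) =
      2 * ∑ i ∈ Finset.range (k - 1), Nat.choose ℓ i * Nat.fib (k - i)
        + 2 * Nat.choose ℓ (k - 1)
        + ∑ j ∈ Finset.Icc 1 ℓ, Nat.choose j (ℓ - j + k) := by
  have h1 : a k (k + ℓ) = b k 0 (k + ℓ) + 1 := by
    rw [a_eq_cnt, cnt_eq_b]
  have h2 := phase2 k hk ℓ 0
  have e1 : k + ℓ - 0 + 1 = k + ℓ + 1 := by omega
  have e2 : k - 1 - 0 = k - 1 := by omega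
  rw [e1, e2, if_pos (by omega : 0 < k)] at h2
  have e3 : ∑ m ∈ Finset.Icc (0 + 2) (k - 1), Nat.choose (k + ℓ - 1 - m) (m - (0 + 2)) =
      ∑ m ∈ Finset.Icc 2 (k - 1), Nat.choose (k + ℓ - 1 - m) (m - 2) := by
    norm_num
  rw [e3] at h2
  have h3 := claimX ℓ k hk
  simp only [L, R] at h3
  omega
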